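/- arXiv:1412.0972 — 3 statements merged into one kernel-verified Lean document; each statement's English description precedes it below -/
import Mathlib

section
/- Let V be a finite set, G=(V,E) a decomposable undirected graph with clique set 𝒞 and separator multiset 𝒮, and let 𝔭 be the parent function of a moral DAG with skeleton G that admits a 𝔭-perfect ordering of the cliques. Then: (i) every clique of G equals 𝔮_v for some v∈V, i.e. 𝒞 ⊆ {𝔮_v : v∈V}; (ii) the separator multiset 𝒮 is contained in the multiset {𝔭_v : v∈V}; (iii) the multiset difference {𝔭_v : v∈V} ∖ 𝒮 equals the set difference {𝔮_v : v∈V} ∖ 𝒞, and every set occurring in {𝔭_v : v∈V} ∖ 𝒮 occurs there at most once. -/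
open MeasureTheory ProbabilityTheory Finset

noncomputable section
open scoped Classical

namespace PDir

variable {V : Type} [Fintype V] [DecidableEq V]

/-- ascending factorial (Pochhammer symbol) `a(a+1)⋯(a+s−1)`. -/
def ascFac (a : ℝ) (s : ℕ) : ℝ := ∏ j ∈ Finset.range s, (a + j)

/-! ### Graph-theoretic notions -/

/-- A clique: a maximal complete subset of the vertices. -/
def IsMaxClique (G : SimpleGraph V) (C : Finset V) : Prop :=
  G.IsClique (C : Set V) ∧ ∀ D : Finset V, G.IsClique (D : Set V) → C ⊆ D → C = D

/-- `𝔮_v = {v} ∪ 𝔭_v`. -/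
def q (par : V → Finset V) (v : V) : Finset V := insert v (par v)

/-- `par` is the parent function of a moral DAG with skeleton `G`. -/
structure IsMoralDAG (G : SimpleGraph V) (par : V → Finset V) : Prop where
  mem_adj : ∀ u v, u ∈ par v → G.Adj u v
  adj_mem : ∀ u v, G.Adj u v → u ∈ par v ∨ v ∈ par u
  asymm : ∀ u v, u ∈ par v → v ∉ par u
  acyclic : ∃ f : V → ℕ, ∀ u v, u ∈ par v → f u < f v
  moral : ∀ v, G.IsClique ((q par v : Finset V) : Set V)

/-- An enumeration (ordering) of the cliques of `G`. -/
structure CliqueEnum (G : SimpleGraph V) (K : ℕ) where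
  C : Fin K → Finset V
  inj : Function.Injective C
  max : ∀ l, IsMaxClique G (C l)
  surj : ∀ D : Finset V, IsMaxClique G D → ∃ l, C l = D

/-- The `l`-th separator `S_l = C_l ∩ (C_1 ∪ ⋯ ∪ C_{l-1})`. -/
def CliqueEnum.sep {G : SimpleGraph V} {K : ℕ} (o : CliqueEnum G K) (l : Fin K) : Finset V :=
  o.C l ∩ (Finset.univ.filter (fun j => j < l)).biUnion o.C

/-- A perfect ordering of the cliques. -/
def CliqueEnum.Perfect {G : SimpleGraph V} {K : ℕ} (o : CliqueEnum G K) : Prop :=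
  ∀ l : Fin K, (0 : ℕ) < (l : ℕ) → ∃ j : Fin K, j < l ∧ o.sep l ⊆ o.C j

/-- A `𝔭`-perfect ordering of the cliques. -/
def CliqueEnum.PPerfect {G : SimpleGraph V} {K : ℕ} (o : CliqueEnum G K)
    (par : V → Finset V) : Prop :=
  o.Perfect ∧ ∀ l : Fin K, ∃ v ∈ o.C l \ o.sep l, par v = o.sep l

/-- `S →ₒ C` : the separator `S` and the clique `C` are paired by the ordering `o`. -/
def CliqueEnum.Pairs {G : SimpleGraph V} {K : ℕ} (o : CliqueEnum G K)
    (S C : Finset V) : Prop :=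
  ∃ l : Fin K, o.sep l = S ∧ o.C l = C

/-- Decomposability, via the equivalent characterization: the cliques admit a
perfect ordering (Lauritzen, Prop. 2.17). -/
def Decomposable (G : SimpleGraph V) : Prop :=
  ∃ (K : ℕ) (o : CliqueEnum G K), o.Perfect

/-- `𝔔 = ⋂_{𝔭∈Ps} {𝔮_v : v ∈ V}` (as a set of subsets). -/
def Qfam (Ps : Finset (V → Finset V)) : Finset (Finset V) :=
  Finset.univ.filter (fun A => ∀ par ∈ Ps, ∃ v, q par v = A)

/-- `ℜ = 𝔔 ∖ 𝒞`. -/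
def Rfam (G : SimpleGraph V) (Ps : Finset (V → Finset V)) : Finset (Finset V) :=
  (Qfam Ps).filter (fun A => ¬ IsMaxClique G A)

/-- The chain `S = Q_{j_C} ⊊ Q_{j_C - 1} ⊊ ⋯ ⊊ Q_1 ⊊ Q_0 = C` whose intermediate
elements enumerate the members of `ℜ` contained in `C`. -/
def IsSepChain (ℜ : Finset (Finset V)) (S C : Finset V) (jC : ℕ) (Q : ℕ → Finset V) : Prop :=
  Q 0 = C ∧ Q jC = S ∧ (∀ i, i < jC → Q (i + 1) ⊂ Q i) ∧
  ∀ B : Finset V, (B ∈ ℜ ∧ B ⊆ C) ↔ ∃ i, 0 < i ∧ i < jC ∧ Q i = B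

/-! ### Cells, marginals, conditionals -/

variable (ι : V → Type) [∀ v, Fintype (ι v)] [∀ v, DecidableEq (ι v)]

/-- A cell of the full contingency table. -/
abbrev Cell : Type := ∀ v : V, ι v

/-- A `D`-marginal cell. -/
abbrev CellOn (D : Finset V) : Type := ∀ v : {x : V // x ∈ D}, ι v.1

def restrict (D : Finset V) (i : Cell ι) : CellOn ι D := fun v => i v.1

/-- `D`-marginal of a table of reals. -/
def marg (p : Cell ι → ℝ) (D : Finset V) (n : CellOn ι D) : ℝ :=
  ∑ j : Cell ι, if restrict ι D j = n then p j else 0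

/-- `D`-marginal of a table of counts. -/
def margCount (r : Cell ι → ℕ) (D : Finset V) (n : CellOn ι D) : ℕ :=
  ∑ j : Cell ι, if restrict ι D j = n then r j else 0

/-- `B`-marginal of a parameter family indexed by cells on `A ⊇ B`. -/
def margParam (A B : Finset V) (ν : CellOn ι A → ℝ) (n : CellOn ι B) : ℝ :=
  ∑ m : CellOn ι A,
    if (∀ (w : V) (hB : w ∈ B) (hA : w ∈ A), m ⟨w, hA⟩ = n ⟨w, hB⟩) then ν m else 0

/-- Extension of a `𝔭_v`-cell `k` by the value `m` at `v`, giving a `𝔮_v`-cell `(k, m)`. -/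
def qcell (par : V → Finset V) (v : V) (k : CellOn ι (par v)) (m : ι v) :
    CellOn ι (q par v) :=
  fun w => if h : (w : V) = v then cast (congrArg ι h).symm m
    else k ⟨w.1, by
      have hw := w.2
      simp only [q, Finset.mem_insert] at hw
      exact hw.resolve_left h⟩

/-- The conditional probability `𝐩^{v|𝔭_v}_{m|k} = 𝐩^{𝔮_v}((k,m)) / 𝐩^{𝔭_v}(k)`. -/
def condp (p : Cell ι → ℝ) (par : V → Finset V) (v : V) (k : CellOn ι (par v)) (m : ι v) : ℝ :=
  marg ι p (q par v) (qcell ι par v k m) / marg ι p (par v) k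

/-- Combine a `B`-cell and an `(A∖B)`-cell into an `A`-cell. -/
def glue (A B : Finset V) (k : CellOn ι B) (m : CellOn ι (A \ B)) : CellOn ι A :=
  fun w => if h : (w : V) ∈ B then k ⟨w.1, h⟩ else m ⟨w.1, Finset.mem_sdiff.mpr ⟨w.2, h⟩⟩

/-- The conditional probability `𝐩^{A}((k,m)) / 𝐩^{B}(k)` for `B ⊆ A`,
`k ∈ ℐ_B`, `m ∈ ℐ_{A∖B}`. -/
def condRatio (p : Cell ι → ℝ) (A B : Finset V) (k : CellOn ι B) (m : CellOn ι (A \ B)) : ℝ :=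
  marg ι p A (glue ι A B k m) / marg ι p B k

/-- Transport of a cell along an equality of index sets. -/
def recell {A B : Finset V} (h : A = B) (n : CellOn ι B) : CellOn ι A :=
  fun w => n ⟨w.1, h ▸ w.2⟩

def singleCell (u : V) (k : ι u) : CellOn ι {u} :=
  fun w => cast (congrArg ι (Finset.mem_singleton.mp w.2)).symm k

def pairCell (u w : V) (k : ι u) (l : ι w) : CellOn ι ({u, w} : Finset V) :=
  fun x => if h : (x : V) = u then cast (congrArg ι h).symm k
    else cast (congrArg ι (Finset.mem_singleton.mp
      ((Finset.mem_insert.mp x.2).resolve_left h))).symm l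

/-! ### Probabilistic notions -/

variable {Ω : Type} [MeasurableSpace Ω]

/-- `𝐩` is a random vector of cell probabilities: measurable entries, a.s. positive
and summing to one. -/
def IsRandProb (μpr : Measure Ω) (p : Ω → Cell ι → ℝ) : Prop :=
  (∀ i, Measurable fun ω => p ω i) ∧
  ∀ᵐ ω ∂μpr, (∀ i, 0 < p ω i) ∧ (∑ i, p ω i) = 1

/-- `𝐩` is associated with (factorizes according to) `G`, the cliques and separators
being recorded by the perfect ordering `o`. -/
def AssocWith (μpr : Measure Ω) (p : Ω → Cell ι → ℝ) {G : SimpleGraph V} {K : ℕ}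
    (o : CliqueEnum G K) : Prop :=
  ∀ᵐ ω ∂μpr, ∀ i : Cell ι,
    p ω i * ∏ l : Fin K, marg ι (p ω) (o.sep l) (restrict ι (o.sep l) i) =
      ∏ l : Fin K, marg ι (p ω) (o.C l) (restrict ι (o.C l) i)

/-- Local and global parameter independence of `𝐩` with respect to the DAG `𝔭`:
the random vectors `(𝐩^{v|𝔭_v}_{·|k})`, `k ∈ ℐ_{𝔭_v}`, `v ∈ V`, are mutually independent. -/
def ParamIndep (μpr : Measure Ω) (p : Ω → Cell ι → ℝ) (par : V → Finset V) : Prop :=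
  iIndepFun
    (fun (x : Σ v : V, CellOn ι (par v)) (ω : Ω) => fun m : ι x.1 => condp ι (p ω) par x.1 x.2 m)
    μpr

/-- A random object is non-degenerate if it is not a.s. constant. -/
def Nondeg {α : Type} (μpr : Measure Ω) (f : Ω → α) : Prop :=
  ¬ ∃ c : α, ∀ᵐ ω ∂μpr, f ω = c

/-- A random vector `q` satisfies the Dirichlet moment identities with (positive)
parameters `β`. -/
def DirMoments {M : Type} [Fintype M] (μpr : Measure Ω) (qv : Ω → M → ℝ) (β : M → ℝ) : Prop :=
  (∀ m, 0 < β m) ∧ ∀ z : M → ℕ,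
    (∫ ω, ∏ m, (qv ω m) ^ (z m) ∂μpr) =
      (∏ m, ascFac (β m) (z m)) / ascFac (∑ m, β m) (∑ m, z m)

/-- `𝐩` has the `𝔭`-Dirichlet distribution with parameters `α`. -/
def IsPDirichlet (μpr : Measure Ω) (p : Ω → Cell ι → ℝ) (par : V → Finset V)
    (α : (v : V) → CellOn ι (par v) → ι v → ℝ) : Prop :=
  (∀ᵐ ω ∂μpr, ∀ i : Cell ι,
      p ω i = ∏ v, condp ι (p ω) par v (restrict ι (par v) i) (i v)) ∧
  ParamIndep ι μpr p par ∧
  ∀ (v : V) (k : CellOn ι (par v)), DirMoments μpr (fun ω => condp ι (p ω) par v k) (α v k)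

/-- The moment `E ∏_i 𝐩(i)^{r_i}`. -/
def moment (μpr : Measure Ω) (p : Ω → Cell ι → ℝ) (r : Cell ι → ℕ) : ℝ :=
  ∫ ω, ∏ i : Cell ι, (p ω i) ^ (r i) ∂μpr

end PDir

namespace PDir

-- auxiliary lemmas
lemma exists_inj_topo [Fintype V] [DecidableEq V] {G : SimpleGraph V} {par : V → Finset V} (hpar : IsMoralDAG G par) :
    ∃ g : V → ℕ, Function.Injective g ∧ ∀ u v, u ∈ par v → g u < g v := by
  obtain ⟨f, hf⟩ := hpar.acyclic
  rcases isEmpty_or_nonempty V with hV | hV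
  · exact ⟨fun _ => 0, fun v => (IsEmpty.false v).elim, fun u v _ => (IsEmpty.false v).elim⟩
  · have hN : 0 < Fintype.card V := Fintype.card_pos
    set N := Fintype.card V with hNdef
    let e := Fintype.equivFin V
    refine ⟨fun v => f v * N + (e v : ℕ), ?_, ?_⟩
    · have key : ∀ u v : V, f u < f v → f u * N + (e u : ℕ) < f v * N + (e v : ℕ) := by
        intro u v h
        calc f u * N + (e u : ℕ) < f u * N + N := by
              exact Nat.add_lt_add_left (Fin.is_lt (e u)) _
          _ = (f u + 1) * N := by ring
          _ ≤ f v * N := Nat.mul_le_mul_right N h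
          _ ≤ f v * N + (e v : ℕ) := Nat.le_add_right _ _
      intro u v h
      rcases lt_trichotomy (f u) (f v) with hlt | heq | hgt
      · exact absurd h (Nat.ne_of_lt (key u v hlt))
      · have : (e u : ℕ) = (e v : ℕ) := by
          have h' : f u * N + (e u : ℕ) = f u * N + (e v : ℕ) := by
            simp only at h; rw [heq] at h; omega
          exact Nat.add_left_cancel h'
        exact e.injective (Fin.ext this)
      · exact absurd h.symm (Nat.ne_of_lt (key v u hgt))
    · intro u v h
      calc f u * N + (e u : ℕ) < f u * N + N := Nat.add_lt_add_left (Fin.is_lt (e u)) _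
        _ = (f u + 1) * N := by ring
        _ ≤ f v * N := Nat.mul_le_mul_right N (hf u v h)
        _ ≤ f v * N + (e v : ℕ) := Nat.le_add_right _ _

lemma exists_maxclique_superset [Fintype V] [DecidableEq V] (G : SimpleGraph V) (A : Finset V) (hA : G.IsClique (A : Set V)) :
    ∃ C, IsMaxClique G C ∧ A ⊆ C := by
  classical
  set cand := Finset.univ.filter (fun D : Finset V => G.IsClique (D : Set V) ∧ A ⊆ D) with hcand
  have hA' : A ∈ cand := by simp [hcand, hA]
  obtain ⟨C, hC, hmax⟩ := Finset.exists_max_image cand (fun D => D.card) ⟨A, hA'⟩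
  simp only [hcand, Finset.mem_filter, Finset.mem_univ, true_and] at hC
  refine ⟨C, ⟨hC.1, ?_⟩, hC.2⟩
  intro D hD hCD
  have hDc : D ∈ cand := by
    simp only [hcand, Finset.mem_filter, Finset.mem_univ, true_and]
    exact ⟨hD, hC.2.trans hCD⟩
  exact Finset.eq_of_subset_of_card_le hCD (hmax D hDc)



/-- Lemma `CS`: for a moral DAG `𝔭` with skeleton the decomposable
graph `G` admitting a `𝔭`-perfect ordering `o`:
(i) every clique of `G` is of the form `𝔮_v`;
(ii) the separator multiset is contained in the multiset `{𝔭_v : v ∈ V}`;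
(iii) the multiset difference `{𝔭_v : v ∈ V} ∖ 𝒮` has no repeated element and, as a set,
equals `{𝔮_v : v ∈ V} ∖ 𝒞`. -/
theorem statement0 {V : Type} [Fintype V] [DecidableEq V]
    (G : SimpleGraph V) (hG : Decomposable G)
    (par : V → Finset V) (hpar : IsMoralDAG G par)
    (K : ℕ) (o : CliqueEnum G K) (ho : o.PPerfect par) :
    (∀ C : Finset V, IsMaxClique G C → ∃ v : V, q par v = C) ∧
    ((Finset.univ.val : Multiset (Fin K)).map o.sep ≤
        (Finset.univ.val : Multiset V).map par) ∧
    ((((Finset.univ.val : Multiset V).map par) -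
        ((Finset.univ.val : Multiset (Fin K)).map o.sep)).Nodup ∧
      (((((Finset.univ.val : Multiset V).map par) -
          ((Finset.univ.val : Multiset (Fin K)).map o.sep)).toFinset : Finset (Finset V)) : Set (Finset V)) =
        Set.range (q par) \ {C : Finset V | IsMaxClique G C}) := by
  classical
  obtain ⟨g, hg_inj, hg⟩ := exists_inj_topo hpar
  have h_self : ∀ v : V, v ∉ par v := fun v hv => lt_irrefl _ (hg v v hv)
  have h_mem_sep : ∀ (x : V) (l : Fin K), x ∈ o.sep l ↔ x ∈ o.C l ∧ ∃ j, j < l ∧ x ∈ o.C j := by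
    intro x l
    simp only [CliqueEnum.sep, Finset.mem_inter, Finset.mem_biUnion, Finset.mem_filter,
      Finset.mem_univ, true_and]
  have h_adj : ∀ (l : Fin K) (x y : V), x ∈ o.C l → y ∈ o.C l → x ≠ y → G.Adj x y := by
    intro l x y hx hy hxy
    exact (o.max l).1 (Finset.mem_coe.mpr hx) (Finset.mem_coe.mpr hy) hxy
  have hmemcl : ∀ v : V, ∃ l, v ∈ o.C l := by
    intro v
    have h1 : G.IsClique (({v} : Finset V) : Set V) := by
      rw [Finset.coe_singleton]
      exact SimpleGraph.isClique_singleton v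
    obtain ⟨C, hC, hsub⟩ := exists_maxclique_superset G {v} h1
    obtain ⟨l, hl⟩ := o.surj C hC
    exact ⟨l, hl ▸ hsub (Finset.mem_singleton_self v)⟩
  have hhomene : ∀ v : V, (Finset.univ.filter (fun l => v ∈ o.C l)).Nonempty := by
    intro v
    obtain ⟨l, hl⟩ := hmemcl v
    exact ⟨l, by simp [hl]⟩
  set home : V → Fin K := fun v => (Finset.univ.filter (fun l => v ∈ o.C l)).min' (hhomene v)
    with hhome_def
  have hhome1 : ∀ v, v ∈ o.C (home v) := by
    intro v
    have := Finset.min'_mem _ (hhomene v)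
    simp only [Finset.mem_filter, Finset.mem_univ, true_and] at this
    exact this
  have hhome2 : ∀ (v : V) (j : Fin K), v ∈ o.C j → home v ≤ j := by
    intro v j h
    exact Finset.min'_le _ _ (by simp [h])
  have h_not_sep_home : ∀ v : V, v ∉ o.sep (home v) := by
    intro v hv
    rw [h_mem_sep] at hv
    obtain ⟨_, j, hj, hvj⟩ := hv
    exact absurd (hhome2 v j hvj) (not_le.mpr hj)
  have h_home_eq : ∀ (v : V) (l : Fin K), v ∈ o.C l → v ∉ o.sep l → home v = l := by
    intro v l hmem hsep
    refine le_antisymm (hhome2 v l hmem) ?_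
    by_contra h
    push_neg at h
    exact hsep ((h_mem_sep v l).mpr ⟨hmem, home v, h, hhome1 v⟩)
  have hcex : ∀ l : Fin K, ∃ v, v ∈ o.C l ∧ v ∉ o.sep l ∧ par v = o.sep l := by
    intro l
    obtain ⟨v, hv1, hv2⟩ := ho.2 l
    rw [Finset.mem_sdiff] at hv1
    exact ⟨v, hv1.1, hv1.2, hv2⟩
  choose c hc1 hc2 hc3 using hcex
  have h_home_c : ∀ l, home (c l) = l := fun l => h_home_eq _ _ (hc1 l) (hc2 l)
  -- KEY: parents stay in the home clique
  have hKEY : ∀ (v x : V), x ∈ par v → x ∈ o.C (home v) := by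
    intro v x hx
    set M := Finset.univ.filter (fun m : Fin K => x ∈ o.C m ∧ v ∈ o.C m) with hM
    have hMne : M.Nonempty := by
      obtain ⟨C, hC, hsub⟩ := exists_maxclique_superset G (q par v) (hpar.moral v)
      obtain ⟨l, hl⟩ := o.surj C hC
      refine ⟨l, ?_⟩
      simp only [hM, Finset.mem_filter, Finset.mem_univ, true_and]
      exact ⟨hl ▸ hsub (Finset.mem_insert_of_mem hx), hl ▸ hsub (Finset.mem_insert_self v _)⟩
    set m := M.min' hMne with hm
    have hmM : m ∈ M := Finset.min'_mem _ _
    rw [hM, Finset.mem_filter] at hmM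
    obtain ⟨-, hxm, hvm⟩ := hmM
    have hmin : ∀ j : Fin K, x ∈ o.C j → v ∈ o.C j → m ≤ j := by
      intro j h1 h2
      refine Finset.min'_le _ _ ?_
      simp only [hM, Finset.mem_filter, Finset.mem_univ, true_and]
      exact ⟨h1, h2⟩
    by_cases hhm : home v = m
    · rwa [hhm]
    have hlt : home v < m := lt_of_le_of_ne (hhome2 v m hvm) hhm
    have hvsep : v ∈ o.sep m := (h_mem_sep v m).mpr ⟨hvm, home v, hlt, hhome1 v⟩
    by_cases hxs : x ∈ o.sep m
    · exfalso
      have hpos : (0:ℕ) < (m:ℕ) := by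
        have h' : ((home v : Fin K) : ℕ) < (m:ℕ) := hlt
        omega
      obtain ⟨j, hjm, hsub⟩ := ho.1 m hpos
      have := hmin j (hsub hxs) (hsub hvsep)
      exact absurd hjm (not_lt.mpr this)
    · exfalso
      by_cases hxw : x = c m
      · have hvp : v ∈ par x := by rw [hxw, hc3]; exact hvsep
        exact hpar.asymm v x hvp hx
      · have hadj := h_adj m x (c m) hxm (hc1 m) hxw
        rcases hpar.adj_mem x (c m) hadj with h1 | h2
        · rw [hc3] at h1; exact hxs h1
        · have g1 : g (c m) < g x := hg _ _ h2
          have g2 : g v < g (c m) := hg _ _ (by rw [hc3]; exact hvsep)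
          have g3 : g x < g v := hg _ _ hx
          omega
  -- explicit formulas
  have h_par_eq : ∀ v : V, par v = (o.C (home v)).filter (fun x => g x < g v) := by
    intro v
    ext x
    simp only [Finset.mem_filter]
    constructor
    · intro hx; exact ⟨hKEY v x hx, hg _ _ hx⟩
    · rintro ⟨hx, hlt⟩
      have hxv : x ≠ v := fun h => by rw [h] at hlt; exact lt_irrefl _ hlt
      rcases hpar.adj_mem x v (h_adj _ x v hx (hhome1 v) hxv) with h1 | h2
      · exact h1
      · exact absurd (hg _ _ h2) (by omega)
  have h_q_eq : ∀ v : V, q par v = (o.C (home v)).filter (fun x => g x ≤ g v) := by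
    intro v
    ext x
    simp only [q, Finset.mem_insert, Finset.mem_filter]
    constructor
    · rintro (rfl | hx)
      · exact ⟨hhome1 x, le_refl _⟩
      · rw [h_par_eq v, Finset.mem_filter] at hx; exact ⟨hx.1, le_of_lt hx.2⟩
    · rintro ⟨hx, hle⟩
      rcases lt_or_eq_of_le hle with hlt | heq
      · right; rw [h_par_eq v, Finset.mem_filter]; exact ⟨hx, hlt⟩
      · left; exact hg_inj heq
  have h_sep_eq : ∀ l, o.sep l = (o.C l).filter (fun x => g x < g (c l)) := by
    intro l
    conv_lhs => rw [← hc3 l]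
    rw [h_par_eq (c l), h_home_c l]
  have h_c_mem_par : ∀ w : V, (∀ l, c l ≠ w) → c (home w) ∈ par w := by
    intro w hw
    have hne : c (home w) ≠ w := hw _
    rcases hpar.adj_mem (c (home w)) w (h_adj _ _ _ (hc1 _) (hhome1 w) hne) with h1 | h2
    · exact h1
    · exfalso
      rw [hc3] at h2
      exact h_not_sep_home w h2
  have h_main : ∀ w : V, (∀ l, c l ≠ w) →
      ∃ u : V, q par u = par w ∧ home u = home w ∧ u ∈ par w ∧ ∀ x ∈ par w, g x ≤ g u := by
    intro w hw
    obtain ⟨u, huw, hmax⟩ := Finset.exists_max_image (par w) g ⟨c (home w), h_c_mem_par w hw⟩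
    have huC : u ∈ o.C (home w) := hKEY w u huw
    have husep : u ∉ o.sep (home w) := by
      intro hus
      rw [h_sep_eq] at hus
      have h1 := (Finset.mem_filter.mp hus).2
      have h2 := hmax _ (h_c_mem_par w hw)
      omega
    have hhu : home u = home w := h_home_eq u _ huC husep
    refine ⟨u, ?_, hhu, huw, hmax⟩
    rw [h_q_eq u, h_par_eq w, hhu]
    ext x
    simp only [Finset.mem_filter]
    constructor
    · rintro ⟨h1, h2⟩; exact ⟨h1, lt_of_le_of_lt h2 (hg _ _ huw)⟩
    · rintro ⟨h1, h2⟩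
      refine ⟨h1, hmax x ?_⟩
      rw [h_par_eq w]
      exact Finset.mem_filter.mpr ⟨h1, h2⟩
  -- part (i)
  have part1 : ∀ C : Finset V, IsMaxClique G C → ∃ v, q par v = C := by
    intro C hC
    obtain ⟨l, rfl⟩ := o.surj C hC
    obtain ⟨v, hvC, hmax⟩ := Finset.exists_max_image (o.C l) g ⟨c l, hc1 l⟩
    have hvs : v ∉ o.sep l := by
      intro h
      rw [h_sep_eq] at h
      have h1 := (Finset.mem_filter.mp h).2
      have h2 := hmax _ (hc1 l)
      omega
    refine ⟨v, ?_⟩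
    rw [h_q_eq v, h_home_eq v l hvC hvs]
    exact Finset.filter_eq_self.mpr (fun x hx => hmax x hx)
  -- multisets
  have h_c_inj : Function.Injective c := by
    intro l l' h
    rw [← h_home_c l, ← h_home_c l', h]
  set s : Multiset V := Finset.univ.val.map c with hs_def
  have hs_nodup : s.Nodup := Multiset.Nodup.map h_c_inj Finset.univ.nodup
  have hs_le : s ≤ Finset.univ.val := by
    rw [Multiset.le_iff_subset hs_nodup]
    intro x _
    exact Finset.mem_val.mpr (Finset.mem_univ x)
  have h_map_sep : (Finset.univ.val : Multiset (Fin K)).map o.sep = s.map par := by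
    rw [hs_def, Multiset.map_map]
    exact Multiset.map_congr rfl (fun l _ => (hc3 l).symm)
  have part2 : (Finset.univ.val : Multiset (Fin K)).map o.sep ≤
      (Finset.univ.val : Multiset V).map par := by
    rw [h_map_sep]
    exact Multiset.map_le_map hs_le
  set t : Multiset V := Finset.univ.val - s with ht_def
  have ht_nodup : t.Nodup := Multiset.nodup_of_le tsub_le_self Finset.univ.nodup
  have h_split : (Finset.univ.val : Multiset V) = s + t := (add_tsub_cancel_of_le hs_le).symm
  have hD : (Finset.univ.val : Multiset V).map par -
      (Finset.univ.val : Multiset (Fin K)).map o.sep = t.map par := by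
    conv_lhs => rw [h_split]
    rw [Multiset.map_add, ← h_map_sep]
    exact add_tsub_cancel_left _ _
  have ht_mem : ∀ w : V, w ∈ t ↔ ∀ l, c l ≠ w := by
    intro w
    have hcount_univ : Multiset.count w (Finset.univ.val : Multiset V) = 1 :=
      Multiset.count_eq_one_of_mem Finset.univ.nodup (Finset.mem_val.mpr (Finset.mem_univ w))
    constructor
    · intro hwt l hl
      have hws : w ∈ s := by
        rw [hs_def]
        exact Multiset.mem_map.mpr ⟨l, Finset.mem_val.mpr (Finset.mem_univ l), hl⟩
      have h1 : 0 < Multiset.count w s := Multiset.count_pos.mpr hws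
      have h2 : 0 < Multiset.count w t := Multiset.count_pos.mpr hwt
      rw [ht_def, Multiset.count_sub, hcount_univ] at h2
      omega
    · intro hw
      have hws : w ∉ s := by
        rw [hs_def]
        intro h
        obtain ⟨l, _, hl⟩ := Multiset.mem_map.mp h
        exact hw l hl
      have h0 : Multiset.count w s = 0 := Multiset.count_eq_zero.mpr hws
      have : 0 < Multiset.count w t := by
        rw [ht_def, Multiset.count_sub, hcount_univ, h0]
        omega
      exact Multiset.count_pos.mp this
  have part3a : ((Finset.univ.val : Multiset V).map par -
      (Finset.univ.val : Multiset (Fin K)).map o.sep).Nodup := by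
    rw [hD]
    refine Multiset.Nodup.map_on ?_ ht_nodup
    intro w1 hw1 w2 hw2 hpp
    rw [ht_mem] at hw1 hw2
    by_cases hh : home w1 = home w2
    · by_contra hne
      rcases lt_trichotomy (g w1) (g w2) with hlt | heqg | hgt
      · have hmem : w1 ∈ par w2 := by
          rw [h_par_eq w2]
          exact Finset.mem_filter.mpr ⟨hh ▸ hhome1 w1, hlt⟩
        rw [← hpp] at hmem
        exact h_self w1 hmem
      · exact hne (hg_inj heqg)
      · have hmem : w2 ∈ par w1 := by
          rw [h_par_eq w1]
          exact Finset.mem_filter.mpr ⟨hh ▸ hhome1 w2, hgt⟩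
        rw [hpp] at hmem
        exact h_self w2 hmem
    · obtain ⟨u1, hq1, hh1, hu1, hm1⟩ := h_main w1 hw1
      obtain ⟨u2, hq2, hh2, hu2, hm2⟩ := h_main w2 hw2
      have hu12 : u1 = u2 := by
        apply hg_inj
        have a1 := hm1 u2 (by rw [hpp]; exact hu2)
        have a2 := hm2 u1 (by rw [← hpp]; exact hu1)
        omega
      exact absurd (by rw [← hh1, hu12, hh2] : home w1 = home w2) hh
  have part3b : ((((Finset.univ.val : Multiset V).map par -
      (Finset.univ.val : Multiset (Fin K)).map o.sep).toFinset : Finset (Finset V)) :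
      Set (Finset V)) = Set.range (q par) \ {C : Finset V | IsMaxClique G C} := by
    rw [hD]
    ext A
    simp only [Finset.coe_sort_coe, Finset.mem_coe, Multiset.mem_toFinset, Multiset.mem_map,
      Set.mem_diff, Set.mem_range, Set.mem_setOf_eq]
    constructor
    · rintro ⟨w, hwt, rfl⟩
      obtain ⟨u, hqu, -, -, -⟩ := h_main w ((ht_mem w).mp hwt)
      refine ⟨⟨u, hqu⟩, ?_⟩
      intro hcl
      have heq := hcl.2 (q par w) (hpar.moral w) (Finset.subset_insert w (par w))
      have hw : w ∈ par w := by rw [heq]; exact Finset.mem_insert_self w _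
      exact h_self w hw
    · rintro ⟨⟨u, rfl⟩, hnc⟩
      have hqsub : q par u ⊆ o.C (home u) := by
        rw [h_q_eq u]
        exact Finset.filter_subset _ _
      have hqne : q par u ≠ o.C (home u) := by
        intro h
        apply hnc
        rw [h]
        exact o.max _
      obtain ⟨y, hyC, hyq⟩ := Finset.exists_of_ssubset (lt_of_le_of_ne hqsub hqne)
      have hyg : g u < g y := by
        by_contra h
        exact hyq (by rw [h_q_eq u]; exact Finset.mem_filter.mpr ⟨hyC, by omega⟩)
      obtain ⟨w, hwB, hwmin⟩ := Finset.exists_min_image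
        ((o.C (home u)).filter (fun y => g u < g y)) g ⟨y, Finset.mem_filter.mpr ⟨hyC, hyg⟩⟩
      rw [Finset.mem_filter] at hwB
      have hwmin' : ∀ x ∈ o.C (home u), g u < g x → g w ≤ g x := by
        intro x h1 h2
        exact hwmin x (Finset.mem_filter.mpr ⟨h1, h2⟩)
      have hwsep : w ∉ o.sep (home u) := by
        intro h
        rw [h_sep_eq] at h
        have h2 := (Finset.mem_filter.mp h).2
        have h3 : g (c (home u)) ≤ g u := by
          by_contra hcon
          push_neg at hcon
          apply h_not_sep_home u
          rw [h_sep_eq]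
          exact Finset.mem_filter.mpr ⟨hhome1 u, hcon⟩
        have h4 := hwB.2
        omega
      have hhw : home w = home u := h_home_eq w _ hwB.1 hwsep
      have hpw : par w = q par u := by
        rw [h_par_eq w, hhw, h_q_eq u]
        ext x
        simp only [Finset.mem_filter]
        constructor
        · rintro ⟨h1, h2⟩
          refine ⟨h1, ?_⟩
          by_contra hcon
          push_neg at hcon
          have := hwmin' x h1 hcon
          omega
        · rintro ⟨h1, h2⟩
          exact ⟨h1, lt_of_le_of_lt h2 hwB.2⟩
      have hwt : w ∈ t := by
        rw [ht_mem]
        intro l' hl'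
        have hll : l' = home u := by rw [← h_home_c l', hl', hhw]
        rw [hll] at hl'
        have husep : u ∈ o.sep (home u) := by
          rw [← hc3 (home u), hl', hpw]
          exact Finset.mem_insert_self u _
        exact h_not_sep_home u husep
      exact ⟨w, hwt, hpw⟩
  exact ⟨part1, part2, part3a, part3b⟩


end PDir
end
end

section
/- Let 𝔭 be the parent function of a moral DAG with skeleton G, and suppose 𝐩 has the 𝔭-Dirichlet distribution with positive parameters α^{v|𝔭_v}_{m|k}. Then for every table r=(r_i)_{i∈ℐ} of nonnegative integers, E ∏_{i∈ℐ} 𝐩(i)^{r_i} = ∏_{v∈V} ∏_{k∈ℐ_{𝔭_v}} [ ∏_{m∈ℐ_v} (α^{v|𝔭_v}_{m|k})^{r^{𝔮_v}_{(k,m)}} / (α̃^{𝔭_v}_k)^{r^{𝔭_v}_k} ], where α̃^{𝔭_v}_k = ∑_{m∈ℐ_v} α^{v|𝔭_v}_{m|k} and all exponents of positive bases denote ascending factorials (a)^s = a(a+1)⋯(a+s−1). -/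
open MeasureTheory ProbabilityTheory Finset

noncomputable section
open scoped Classical

namespace PDir

section Aux

variable {V : Type} [Fintype V] [DecidableEq V]
variable (ι : V → Type) [∀ v, Fintype (ι v)] [∀ v, DecidableEq (ι v)]

lemma measurable_marg {Ω : Type} [MeasurableSpace Ω] (p : Ω → Cell ι → ℝ)
    (hp : ∀ i, Measurable fun ω => p ω i) (D : Finset V) (n : CellOn ι D) :
    Measurable fun ω => marg ι (p ω) D n := by
  unfold marg
  exact Finset.measurable_sum _ fun j _ => by
    split_ifs
    exacts [hp j, measurable_const]

lemma measurable_condp {Ω : Type} [MeasurableSpace Ω] (p : Ω → Cell ι → ℝ)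
    (hp : ∀ i, Measurable fun ω => p ω i) (par : V → Finset V) (v : V)
    (k : CellOn ι (par v)) (m : ι v) :
    Measurable fun ω => condp ι (p ω) par v k m :=
  (measurable_marg ι p hp _ _).div (measurable_marg ι p hp _ _)

lemma qcell_restrict (par : V → Finset V) (v : V) (i : Cell ι) :
    qcell ι par v (restrict ι (par v) i) (i v) = restrict ι (q par v) i := by
  funext w
  unfold qcell restrict
  obtain ⟨w, hw⟩ := w
  by_cases h : w = v
  · subst h
    rw [dif_pos rfl]
    exact cast_eq _ _
  · rw [dif_neg h]

lemma restrict_q_eq_qcell_iff (par : V → Finset V) (v : V) (hv : v ∉ par v)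
    (i : Cell ι) (k : CellOn ι (par v)) (m : ι v) :
    restrict ι (q par v) i = qcell ι par v k m ↔
      restrict ι (par v) i = k ∧ i v = m := by
  constructor
  · intro h
    constructor
    · funext w
      have hw : (w : V) ∈ q par v := Finset.mem_insert_of_mem w.2
      have hne : (w : V) ≠ v := fun he => hv (by simpa only [he] using w.2)
      have h1 := congrFun h ⟨w.1, hw⟩
      show i w.1 = k w
      rw [show restrict ι (q par v) i ⟨w.1, hw⟩ = i w.1 from rfl] at h1
      rw [h1]
      unfold qcell
      rw [dif_neg hne]
    · have h1 := congrFun h ⟨v, Finset.mem_insert_self v _⟩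
      rw [show restrict ι (q par v) i ⟨v, Finset.mem_insert_self v _⟩ = i v from rfl] at h1
      rw [h1]
      unfold qcell
      rw [dif_pos rfl]
      exact cast_eq _ m
  · rintro ⟨h1, h2⟩
    rw [← h1, ← h2, qcell_restrict]

lemma margCount_q_eq (par : V → Finset V) (v : V) (hv : v ∉ par v)
    (r : Cell ι → ℕ) (k : CellOn ι (par v)) (m : ι v) :
    margCount ι r (q par v) (qcell ι par v k m) =
      ∑ i : Cell ι, if restrict ι (par v) i = k ∧ i v = m then r i else 0 := by
  unfold margCount
  refine Finset.sum_congr rfl fun i _ => ?_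
  by_cases h : restrict ι (q par v) i = qcell ι par v k m
  · rw [if_pos h, if_pos ((restrict_q_eq_qcell_iff ι par v hv i k m).mp h)]
  · rw [if_neg h, if_neg (fun hc => h ((restrict_q_eq_qcell_iff ι par v hv i k m).mpr hc))]

lemma sum_margCount_q (par : V → Finset V) (v : V) (hv : v ∉ par v)
    (r : Cell ι → ℕ) (k : CellOn ι (par v)) :
    ∑ m : ι v, margCount ι r (q par v) (qcell ι par v k m) = margCount ι r (par v) k := by
  have h := fun m => margCount_q_eq ι par v hv r k m
  simp only [h]
  rw [Finset.sum_comm]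
  unfold margCount
  refine Finset.sum_congr rfl fun i _ => ?_
  by_cases hk : restrict ι (par v) i = k
  · simp [hk]
  · simp [hk]

lemma integral_finset_prod_of_iIndepFun {Ω κ : Type} [MeasurableSpace Ω] {μ : Measure Ω}
    {f : κ → Ω → ℝ}
    (h : ProbabilityTheory.iIndepFun f μ)
    (hm : ∀ i, Measurable (f i)) (s : Finset κ) :
    ∫ ω, ∏ i ∈ s, f i ω ∂μ = ∏ i ∈ s, ∫ ω, f i ω ∂μ := by
  classical
  induction s using Finset.induction_on with
  | empty =>
      have : IsProbabilityMeasure μ := h.isProbabilityMeasure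
      simp
  | @insert a s ha ih =>
      have hind : ProbabilityTheory.IndepFun (f a) (∏ j ∈ s, f j) μ :=
        (h.indepFun_finsetProd_of_notMem hm ha).symm
      have hprodmeas : Measurable (∏ j ∈ s, f j) := by
        rw [Finset.prod_fn]
        exact Finset.measurable_prod s fun j _ => hm j
      have hmul := hind.integral_mul_eq_mul_integral (hm a).aestronglyMeasurable
        hprodmeas.aestronglyMeasurable
      calc ∫ ω, ∏ i ∈ insert a s, f i ω ∂μ
          = ∫ ω, (f a * ∏ j ∈ s, f j) ω ∂μ := by
            refine integral_congr_ae (Filter.Eventually.of_forall fun ω => ?_)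
            simp [Finset.prod_insert ha, Finset.prod_apply]
        _ = (∫ ω, f a ω ∂μ) * ∫ ω, (∏ j ∈ s, f j) ω ∂μ := hmul
        _ = ∏ i ∈ insert a s, ∫ ω, f i ω ∂μ := by
            rw [Finset.prod_insert ha, ← ih]
            congr 1
            refine integral_congr_ae (Filter.Eventually.of_forall fun ω => ?_)
            simp [Finset.prod_apply]

end Aux

/-- moments of the `𝔭`-Dirichlet distribution. -/
theorem statement2 {V Ω : Type} [Fintype V] [DecidableEq V] [MeasurableSpace Ω]
    (μpr : Measure Ω) [IsProbabilityMeasure μpr]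
    (G : SimpleGraph V) (hG : Decomposable G)
    (ι : V → Type) [∀ v, Fintype (ι v)] [∀ v, DecidableEq (ι v)]
    (hcard : ∀ v, 2 ≤ Fintype.card (ι v))
    (par : V → Finset V) (hpar : IsMoralDAG G par)
    (p : Ω → Cell ι → ℝ) (hp : IsRandProb ι μpr p)
    (α : (v : V) → CellOn ι (par v) → ι v → ℝ)
    (hdir : IsPDirichlet ι μpr p par α) :
    ∀ r : Cell ι → ℕ,
      moment ι μpr p r =
        ∏ v : V, ∏ k : CellOn ι (par v),
          (∏ m : ι v, ascFac (α v k m) (margCount ι r (q par v) (qcell ι par v k m))) /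
            ascFac (∑ m : ι v, α v k m) (margCount ι r (par v) k) := by
  intro r
  classical
  obtain ⟨hfact, hindep, hmom⟩ := hdir
  have hv : ∀ v : V, v ∉ par v := fun v hvv => hpar.asymm v v hvv hvv
  set z : (x : Σ v : V, CellOn ι (par v)) → ι x.1 → ℕ :=
    fun x m => margCount ι r (q par x.1) (qcell ι par x.1 x.2 m) with hzdef
  set Z : (Σ v : V, CellOn ι (par v)) → Ω → ℝ :=
    fun x ω => ∏ m : ι x.1, (condp ι (p ω) par x.1 x.2 m) ^ (z x m) with hZdef
  have hmeasZ : ∀ x, Measurable (Z x) := fun x =>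
    Finset.measurable_prod _ fun m _ =>
      (measurable_condp ι p hp.1 par x.1 x.2 m).pow_const _
  -- a.e. pointwise identity
  have hae : ∀ᵐ ω ∂μpr,
      ∏ i : Cell ι, (p ω i) ^ (r i) = ∏ x : Σ v : V, CellOn ι (par v), Z x ω := by
    filter_upwards [hfact] with ω hω
    have step1 : ∏ i : Cell ι, (p ω i) ^ (r i) =
        ∏ v : V, ∏ i : Cell ι,
          (condp ι (p ω) par v (restrict ι (par v) i) (i v)) ^ (r i) := by
      rw [Finset.prod_comm]
      refine Finset.prod_congr rfl fun i _ => ?_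
      rw [hω i, ← Finset.prod_pow]
    rw [step1, ← Finset.univ_sigma_univ, Finset.prod_sigma]
    refine Finset.prod_congr rfl fun v _ => ?_
    have hfib := Finset.prod_fiberwise (Finset.univ : Finset (Cell ι))
      (fun i => ((restrict ι (par v) i, i v) : CellOn ι (par v) × ι v))
      (fun i => (condp ι (p ω) par v (restrict ι (par v) i) (i v)) ^ (r i))
    rw [← hfib, Fintype.prod_prod_type]
    refine Finset.prod_congr rfl fun k _ => ?_
    show _ = ∏ m : ι v, (condp ι (p ω) par v k m) ^ (z ⟨v, k⟩ m)
    refine Finset.prod_congr rfl fun m _ => ?_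
    have hcond : ∀ i : Cell ι,
        (((restrict ι (par v) i, i v) : CellOn ι (par v) × ι v) = (k, m)) ↔
          (restrict ι (par v) i = k ∧ i v = m) := fun i => iff_of_eq (Prod.mk.injEq _ _ _ _)
    have hsum : ∑ i ∈ Finset.univ.filter
        (fun i : Cell ι => ((restrict ι (par v) i, i v) : CellOn ι (par v) × ι v) = (k, m)),
          r i = z ⟨v, k⟩ m := by
      rw [Finset.sum_filter, hzdef]
      dsimp only
      rw [margCount_q_eq ι par v (hv v) r k m]
      refine Finset.sum_congr rfl fun i _ => ?_
      by_cases h : restrict ι (par v) i = k ∧ i v = m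
      · rw [if_pos ((hcond i).mpr h), if_pos h]
      · rw [if_neg (fun hc => h ((hcond i).mp hc)), if_neg h]
    calc ∏ i ∈ Finset.univ.filter
          (fun i : Cell ι => ((restrict ι (par v) i, i v) : CellOn ι (par v) × ι v) = (k, m)),
            (condp ι (p ω) par v (restrict ι (par v) i) (i v)) ^ (r i)
        = ∏ i ∈ Finset.univ.filter
          (fun i : Cell ι => ((restrict ι (par v) i, i v) : CellOn ι (par v) × ι v) = (k, m)),
            (condp ι (p ω) par v k m) ^ (r i) := by
          refine Finset.prod_congr rfl fun i hi => ?_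
          obtain ⟨h1, h2⟩ := (hcond i).mp (Finset.mem_filter.mp hi).2
          rw [h1, h2]
      _ = (condp ι (p ω) par v k m) ^ (z ⟨v, k⟩ m) := by
          rw [Finset.prod_pow_eq_pow_sum, hsum]
  -- independence of the composed family
  have hcomp : ProbabilityTheory.iIndepFun Z μpr := by
    have hg : ∀ x : Σ v : V, CellOn ι (par v),
        Measurable (fun qv : ι x.1 → ℝ => ∏ m : ι x.1, qv m ^ z x m) :=
      fun x => Finset.measurable_prod _ fun m _ => (measurable_pi_apply m).pow_const _
    exact hindep.comp _ hg
  unfold moment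
  rw [integral_congr_ae hae, integral_finset_prod_of_iIndepFun hcomp hmeasZ,
    ← Finset.univ_sigma_univ, Finset.prod_sigma]
  refine Finset.prod_congr rfl fun v _ => Finset.prod_congr rfl fun k _ => ?_
  have hm := (hmom v k).2 (z ⟨v, k⟩)
  rw [hZdef]
  rw [hm, sum_margCount_q ι par v (hv v) r k]

end PDir
end
end

section
/- Let n ≥ 2 and let F be a positive function on the set of n-tuples of nonnegative integers such that F(0,…,0)=1 and F(x) = ∑_{i=1}^n F(x+e_i) for all x, where e_i is the i-th standard unit vector. Assume there exist positive functions h_1,…,h_n on the nonnegative integers such that for all distinct p,q∈{1,…,n} and all x, F(x+e_p)/F(x+e_q) = h_p(x_p)/h_q(x_q). Then there exists a vector A=(A_1,…,A_n) of positive real numbers such that either F(x) = ∏_{i=1}^n (A_i)^{x_i} / (A_1+⋯+A_n)^{x_1+⋯+x_n} for all x (where (a)^s = a(a+1)⋯(a+s−1) is the ascending factorial), or F(x) = ∏_{i=1}^n A_i^{x_i} for all x (ordinary powers, in which case A_1+⋯+A_n = 1). -/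
noncomputable section

namespace PDir

lemma ascFac_zero (a : ℝ) : ascFac a 0 = 1 := by simp [ascFac]

lemma ascFac_succ (a : ℝ) (s : ℕ) : ascFac a (s+1) = ascFac a s * (a + s) := by
  simp [ascFac, Finset.prod_range_succ]

lemma ascFac_pos {a : ℝ} (ha : 0 < a) (s : ℕ) : 0 < ascFac a s := by
  induction s with
  | zero => simp [ascFac_zero]
  | succ k ih => rw [ascFac_succ]; positivity

lemma add_single_eq_update {n : ℕ} (x : Fin n → ℕ) (q : Fin n) :
    x + Pi.single q 1 = Function.update x q (x q + 1) := by
  funext i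
  by_cases hiq : i = q
  · subst hiq; simp
  · simp [Pi.single_eq_of_ne hiq, Function.update_of_ne hiq]

lemma sum_add_single {n : ℕ} (x : Fin n → ℕ) (q : Fin n) :
    ∑ i : Fin n, (x + Pi.single q 1 : Fin n → ℕ) i = (∑ i, x i) + 1 := by
  simp [Pi.add_apply, Finset.sum_add_distrib, Finset.sum_pi_single]

lemma prod_apply_update {n : ℕ} (f : Fin n → ℕ → ℝ) (x : Fin n → ℕ) (q : Fin n) (v : ℕ) :
    ∏ i, f i (Function.update x q v i) = f q v * ∏ i ∈ Finset.univ.erase q, f i (x i) := by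
  rw [← Finset.mul_prod_erase Finset.univ _ (Finset.mem_univ q), Function.update_self]
  congr 1
  exact Finset.prod_congr rfl fun i hi =>
    by rw [Function.update_of_ne (Finset.ne_of_mem_erase hi)]

lemma sum_apply_update {n : ℕ} (f : Fin n → ℕ → ℝ) (x : Fin n → ℕ) (q : Fin n) (v : ℕ) :
    ∑ i, f i (Function.update x q v i) = f q v + ∑ i ∈ Finset.univ.erase q, f i (x i) := by
  rw [← Finset.add_sum_erase Finset.univ _ (Finset.mem_univ q), Function.update_self]
  congr 1
  exact Finset.sum_congr rfl fun i hi =>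
    by rw [Function.update_of_ne (Finset.ne_of_mem_erase hi)]

lemma eq_of_rec {n : ℕ} (F G : (Fin n → ℕ) → ℝ) (r : (Fin n → ℕ) → Fin n → ℝ)
    (hF0 : F 0 = 1) (hG0 : G 0 = 1)
    (hF : ∀ x q, F (x + Pi.single q 1) = F x * r x q)
    (hG : ∀ x q, G (x + Pi.single q 1) = G x * r x q) :
    ∀ x, F x = G x := by
  have key : ∀ (N : ℕ) (x : Fin n → ℕ), ∑ i, x i = N → F x = G x := by
    intro N
    induction N with
    | zero =>
      intro x hx
      have hx0 : x = 0 := by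
        funext i
        exact Finset.sum_eq_zero_iff.mp hx i (Finset.mem_univ i)
      rw [hx0, hF0, hG0]
    | succ N ih =>
      intro x hx
      have hne : ∃ q, x q ≠ 0 := by
        by_contra hc
        push_neg at hc
        simp only [hc, Finset.sum_const_zero] at hx
        omega
      obtain ⟨q, hq⟩ := hne
      set y := Function.update x q (x q - 1) with hy
      have hxy : x = y + Pi.single q 1 := by
        rw [add_single_eq_update y q]
        funext i
        by_cases hiq : i = q
        · subst hiq; simp [hy]; omega
        · simp [hy, Function.update_of_ne hiq]
      have hyN : ∑ i, y i = N := by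
        have h1 : (∑ i, y i) + 1 = ∑ i, x i := by
          rw [hxy] at hx ⊢
          rw [sum_add_single]
        omega
      rw [hxy, hF, hG, ih y hyN]
  intro x; exact key _ x rfl

/-- Lemma `gammas`: a positive function on `ℕ^n` with `F(0) = 1`,
satisfying `F(x) = ∑ᵢ F(x + eᵢ)` and the separation identity
`F(x+eₚ)/F(x+e_q) = hₚ(xₚ)/h_q(x_q)`, is either a Dirichlet moment function or a
product of ordinary powers. -/
theorem statement15 (n : ℕ) (hn : 2 ≤ n)
    (F : (Fin n → ℕ) → ℝ) (hFpos : ∀ x, 0 < F x) (hF0 : F 0 = 1)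
    (hsum : ∀ x : Fin n → ℕ, F x = ∑ i : Fin n, F (x + Pi.single i 1))
    (hsep : ∃ h : Fin n → ℕ → ℝ, (∀ i s, 0 < h i s) ∧
      ∀ p q : Fin n, p ≠ q → ∀ x : Fin n → ℕ,
        F (x + Pi.single p 1) / F (x + Pi.single q 1) = h p (x p) / h q (x q)) :
    ∃ A : Fin n → ℝ, (∀ i, 0 < A i) ∧
      ((∀ x : Fin n → ℕ,
          F x = (∏ i, ascFac (A i) (x i)) / ascFac (∑ i, A i) (∑ i, x i)) ∨
        ((∑ i, A i) = 1 ∧ ∀ x : Fin n → ℕ, F x = ∏ i, (A i) ^ (x i))) := by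
  obtain ⟨h, hpos, hratio⟩ := hsep
  set S : (Fin n → ℕ) → ℝ := fun x => ∑ i, h i (x i) with hSdef
  have hSpos : ∀ x, 0 < S x := fun x =>
    Finset.sum_pos (fun i _ => hpos i _) ⟨⟨0, by omega⟩, Finset.mem_univ _⟩
  -- basic recurrence
  have hrec : ∀ x q, F (x + Pi.single q 1) = F x * (h q (x q) / S x) := by
    intro x q
    have key : F x * h q (x q) = F (x + Pi.single q 1) * S x := by
      rw [hsum x, Finset.sum_mul, hSdef]
      simp only
      rw [Finset.mul_sum]
      refine Finset.sum_congr rfl fun i _ => ?_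
      by_cases hiq : i = q
      · subst hiq; ring
      · have := hratio i q hiq x
        rw [div_eq_div_iff (hFpos _).ne' (hpos _ _).ne'] at this
        linarith [this]
    have hS := hSpos x
    field_simp
    linarith [key]
  -- the increments of h are a single constant c
  have hSstep : ∀ (x : Fin n → ℕ) (p : Fin n),
      S (x + Pi.single p 1) = S x + (h p (x p + 1) - h p (x p)) := by
    intro x p
    have h1 : S (x + Pi.single p 1) = h p (x p + 1) + ∑ i ∈ Finset.univ.erase p, h i (x i) := by
      rw [hSdef]; simp only [add_single_eq_update]; exact sum_apply_update h x p (x p + 1)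
    have h2 : S x = h p (x p) + ∑ i ∈ Finset.univ.erase p, h i (x i) :=
      (Finset.add_sum_erase Finset.univ _ (Finset.mem_univ p)).symm
    rw [h1, h2]; ring
  have hSeq : ∀ (x : Fin n → ℕ) (p q : Fin n), p ≠ q →
      S (x + Pi.single p 1) = S (x + Pi.single q 1) := by
    intro x p q hpq
    have e1 : F ((x + Pi.single p 1) + Pi.single q 1)
        = F x * (h p (x p) / S x) * (h q (x q) / S (x + Pi.single p 1)) := by
      rw [hrec, hrec]
      have : (x + Pi.single p 1 : Fin n → ℕ) q = x q := by
        simp [Pi.single_eq_of_ne hpq.symm]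
      rw [this]
    have e2 : F ((x + Pi.single p 1) + Pi.single q 1)
        = F x * (h q (x q) / S x) * (h p (x p) / S (x + Pi.single q 1)) := by
      rw [add_right_comm, hrec, hrec]
      have : (x + Pi.single q 1 : Fin n → ℕ) p = x p := by
        simp [Pi.single_eq_of_ne hpq]
      rw [this]
    rw [e1] at e2
    have hFx := hFpos x
    have h1 := hpos p (x p); have h2 := hpos q (x q)
    have h3 := hSpos x; have h4 := hSpos (x + Pi.single p 1); have h5 := hSpos (x + Pi.single q 1)
    field_simp at e2
    have hne : F x * h p (x p) * h q (x q) * S x ≠ 0 := by positivity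
    have e3 : (F x * h p (x p) * h q (x q) * S x) * S (x + Pi.single q 1)
        = (F x * h p (x p) * h q (x q) * S x) * S (x + Pi.single p 1) := by
      linear_combination (F x * h p (x p) * h q (x q) * S x) * e2
    exact (mul_left_cancel₀ hne e3).symm
  have hdiff : ∀ p q : Fin n, p ≠ q → ∀ s t : ℕ,
      h p (s+1) - h p s = h q (t+1) - h q t := by
    intro p q hpq s t
    set x : Fin n → ℕ := fun i => if i = p then s else t with hx
    have hxp : x p = s := by simp [hx]
    have hxq : x q = t := by simp [hx, hpq.symm]
    have := hSeq x p q hpq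
    rw [hSstep, hSstep, hxp, hxq] at this
    linarith
  set p0 : Fin n := ⟨0, by omega⟩ with hp0def
  set p1 : Fin n := ⟨1, by omega⟩ with hp1def
  have hp01 : p0 ≠ p1 := Fin.ne_of_val_ne (by norm_num)
  set c : ℝ := h p1 1 - h p1 0 with hc
  have hd : ∀ p s, h p (s+1) - h p s = c := by
    intro p s
    by_cases hp : p = p1
    · subst hp
      calc h p1 (s+1) - h p1 s = h p0 (0+1) - h p0 0 := hdiff p1 p0 hp01.symm s 0
        _ = h p1 (0+1) - h p1 0 := hdiff p0 p1 hp01 0 0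
        _ = c := by rw [hc]
    · calc h p (s+1) - h p s = h p1 (0+1) - h p1 0 := hdiff p p1 hp s 0
        _ = c := by rw [hc]
  have hlin : ∀ p s, h p s = h p 0 + c * s := by
    intro p s
    induction s with
    | zero => simp
    | succ k ih =>
      have := hd p k
      push_cast
      push_cast at ih
      linarith
  have hcnonneg : 0 ≤ c := by
    by_contra hcneg
    push_neg at hcneg
    obtain ⟨s, hs⟩ := exists_nat_gt (h p0 0 / (-c))
    have h1 := hpos p0 s
    rw [hlin p0 s] at h1
    rw [div_lt_iff₀ (by linarith)] at hs
    nlinarith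
  rcases eq_or_lt_of_le hcnonneg with hc0 | hcpos
  · -- c = 0 : geometric case
    have hconst : ∀ p s, h p s = h p 0 := by
      intro p s; rw [hlin p s, ← hc0]; ring
    set T : ℝ := ∑ i, h i 0 with hT
    have hTpos : 0 < T :=
      Finset.sum_pos (fun i _ => hpos i 0) ⟨⟨0, by omega⟩, Finset.mem_univ _⟩
    refine ⟨fun i => h i 0 / T, fun i => div_pos (hpos i 0) hTpos, Or.inr ⟨?_, ?_⟩⟩
    · rw [← Finset.sum_div, ← hT, div_self hTpos.ne']
    · have hSx : ∀ x, S x = T := by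
        intro x
        rw [hSdef, hT]
        exact Finset.sum_congr rfl fun i _ => hconst i (x i)
      refine eq_of_rec F (fun x => ∏ i, (h i 0 / T) ^ (x i))
        (fun x q => h q (x q) / S x) hF0 (by simp) hrec ?_
      intro x q
      beta_reduce
      rw [hSx, hconst q (x q)]
      simp only [add_single_eq_update]
      rw [prod_apply_update (fun i s => (h i 0 / T) ^ s) x q (x q + 1),
        ← Finset.mul_prod_erase Finset.univ (fun i => (h i 0 / T) ^ (x i)) (Finset.mem_univ q)]
      ring
  · -- c > 0 : Dirichlet case
    set A : Fin n → ℝ := fun i => h i 0 / c with hA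
    have hApos : ∀ i, 0 < A i := fun i => div_pos (hpos i 0) hcpos
    have hBpos : 0 < ∑ i, A i :=
      Finset.sum_pos (fun i _ => hApos i) ⟨⟨0, by omega⟩, Finset.mem_univ _⟩
    have hhc : ∀ p s, h p s = c * (A p + s) := by
      intro p s
      rw [hlin p s, hA]
      field_simp
    have hSc : ∀ x, S x = c * ((∑ i, A i) + (∑ i, x i : ℕ)) := by
      intro x
      rw [hSdef]
      simp only
      have he : ∀ i : Fin n, h i (x i) = c * A i + c * (x i : ℝ) :=
        fun i => by rw [hhc]; ring
      simp only [he]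
      rw [Finset.sum_add_distrib, ← Finset.mul_sum, ← Finset.mul_sum]
      push_cast
      ring
    refine ⟨A, hApos, Or.inl ?_⟩
    refine eq_of_rec F
      (fun x => (∏ i, ascFac (A i) (x i)) / ascFac (∑ i, A i) (∑ i, x i))
      (fun x q => h q (x q) / S x) hF0 ?_ hrec ?_
    · simp [ascFac_zero]
    · intro x q
      beta_reduce
      have hnum : (∏ i, ascFac (A i) ((x + Pi.single q 1 : Fin n → ℕ) i))
          = (∏ i, ascFac (A i) (x i)) * (A q + x q) := by
        simp only [add_single_eq_update]
        rw [prod_apply_update (fun i s => ascFac (A i) s) x q (x q + 1), ascFac_succ,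
          ← Finset.mul_prod_erase Finset.univ (fun i => ascFac (A i) (x i)) (Finset.mem_univ q)]
        ring
      have hden : ascFac (∑ i, A i) (∑ i, (x + Pi.single q 1 : Fin n → ℕ) i)
          = ascFac (∑ i, A i) (∑ i, x i) * ((∑ i, A i) + (∑ i, x i : ℕ)) := by
        rw [sum_add_single, ascFac_succ]
      rw [hnum, hden, hSc x, hhc q (x q)]
      have h1 : (0:ℝ) < ascFac (∑ i, A i) (∑ i, x i) := ascFac_pos hBpos _
      have h2 : (0:ℝ) < (∑ i, A i) + (∑ i, x i : ℕ) :=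
        add_pos_of_pos_of_nonneg hBpos (Nat.cast_nonneg _)
      have h3 : (0:ℝ) < A q + x q :=
        add_pos_of_pos_of_nonneg (hApos q) (Nat.cast_nonneg _)
      field_simp

end PDir
end
end
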